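/- arXiv:2409.16251 — 2 statements merged into one kernel-verified Lean document; each statement's English description precedes it below -/
import Mathlib

section
/- Let A, B, C, D be (small) sets of surreal numbers such that every element of A is less than every element of B, every element of C is less than every element of D, and the cuts (A|B) := {x : ∀a∈A, a<x and ∀b∈B, x<b} and (C|D) := {y : ∀c∈C, c<y and ∀d∈D, y<d} are disjoint. Then every element of (A|B) is less than every element of (C|D) if and only if there exist b ∈ B and c ∈ C with b ≤ c. -/
universe u

namespace SetTheory

/-- Conway's pre-games (as in the older Mathlib, `SetTheory.PGame`, which is gone now). -/
inductive PGame : Type (u + 1)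
  | mk : ∀ α β : Type u, (α → PGame) → (β → PGame) → PGame

namespace PGame

/-- Left options. -/
def moveLeft : (x : PGame.{u}) → (match x with | mk l _ _ _ => l) → PGame.{u}
  | mk _ _ L _ => L

/-- Right options. -/
def moveRight : (x : PGame.{u}) → (match x with | mk _ r _ _ => r) → PGame.{u}
  | mk _ _ _ R => R

/-- The pair (`x ≤ y`, `x ⧏ y`) defined by Conway's simultaneous recursion. -/
noncomputable def leLF : PGame.{u} → PGame.{u} → Prop × Prop :=
  PGame.rec (motive := fun _ => PGame.{u} → Prop × Prop)
    (fun xl xr xL xR IHL IHR => fun y =>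
      PGame.rec (motive := fun _ => Prop × Prop)
        (fun yl yr yL yR JL JR =>
          ((∀ i, (IHL i (mk yl yr yL yR)).2) ∧ ∀ j, (JR j).2,
            (∃ i, (JL i).1) ∨ ∃ j, (IHR j (mk yl yr yL yR)).1)) y)

/-- `x ≤ y` for pre-games. -/
def le (x y : PGame.{u}) : Prop := (leLF x y).1

/-- `x ⧏ y` for pre-games. -/
def lf (x y : PGame.{u}) : Prop := (leLF x y).2

/-- `x < y` for pre-games (the preorder's strict relation). -/
def lt (x y : PGame.{u}) : Prop := le x y ∧ ¬ le y x

theorem le_def {x y : PGame.{u}} :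
    le x y ↔ (∀ i, lf (x.moveLeft i) y) ∧ ∀ j, lf x (y.moveRight j) := by
  cases x; cases y; exact Iff.rfl

theorem lf_def {x y : PGame.{u}} :
    lf x y ↔ (∃ i, le x (y.moveLeft i)) ∨ ∃ j, le (x.moveRight j) y := by
  cases x; cases y; exact Iff.rfl

theorem le_refl' (x : PGame.{u}) : le x x := by
  induction x with
  | mk xl xr xL xR ihl ihr =>
    exact le_def.2 ⟨fun i => lf_def.2 (Or.inl ⟨i, ihl i⟩),
      fun j => lf_def.2 (Or.inr ⟨j, ihr j⟩)⟩

theorem le_trans_aux (x y z : PGame.{u}) :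
    (le x y → le y z → le x z) ∧ (le x y → lf y z → lf x z) ∧
      (lf x y → le y z → lf x z) := by
  induction x generalizing y z with
  | mk xl xr xL xR ihxl ihxr =>
  induction y generalizing z with
  | mk yl yr yL yR ihyl ihyr =>
  induction z with
  | mk zl zr zL zR ihzl ihzr =>
  refine ⟨?_, ?_, ?_⟩
  · intro hxy hyz
    exact le_def.2 ⟨fun i => (ihxl i _ _).2.2 ((le_def.1 hxy).1 i) hyz,
      fun j => (ihzr j).2.1 hxy ((le_def.1 hyz).2 j)⟩
  · intro hxy hyz
    rcases lf_def.1 hyz with ⟨i, h⟩ | ⟨j, h⟩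
    · exact lf_def.2 (Or.inl ⟨i, (ihzl i).1 hxy h⟩)
    · exact (ihyr j _).2.2 ((le_def.1 hxy).2 j) h
  · intro hxy hyz
    rcases lf_def.1 hxy with ⟨i, h⟩ | ⟨j, h⟩
    · exact (ihyl i _).2.1 h ((le_def.1 hyz).1 i)
    · exact lf_def.2 (Or.inr ⟨j, (ihxr j _ _).1 h hyz⟩)

theorem le_trans' {x y z : PGame.{u}} (h₁ : le x y) (h₂ : le y z) : le x z :=
  (le_trans_aux x y z).1 h₁ h₂

/-- Numeric pre-games. -/
def Numeric : PGame.{u} → Prop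
  | mk _ _ L R => (∀ i j, lt (L i) (R j)) ∧ (∀ i, Numeric (L i)) ∧ ∀ j, Numeric (R j)

/-- Equivalence of numeric pre-games. -/
instance numSetoid : Setoid {x : PGame.{u} // x.Numeric} :=
  ⟨fun x y => le x.1 y.1 ∧ le y.1 x.1,
    ⟨fun x => ⟨le_refl' _, le_refl' _⟩, fun h => ⟨h.2, h.1⟩,
      fun h₁ h₂ => ⟨le_trans' h₁.1 h₂.1, le_trans' h₂.2 h₁.2⟩⟩⟩

end PGame

end SetTheory

/-- Surreal numbers: numeric pre-games up to equivalence (as in the older Mathlib). -/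
def Surreal : Type (u + 1) := Quotient SetTheory.PGame.numSetoid.{u}

namespace Surreal

open SetTheory.PGame in
instance : LE Surreal.{u} :=
  ⟨Quotient.lift₂ (s₁ := numSetoid) (s₂ := numSetoid) (fun x y => le x.1 y.1)
    (fun _ _ _ _ ha hb => propext ⟨fun h => le_trans' (le_trans' ha.2 h) hb.1,
      fun h => le_trans' (le_trans' ha.1 h) hb.2⟩)⟩

open SetTheory.PGame in
instance : LT Surreal.{u} :=
  ⟨Quotient.lift₂ (s₁ := numSetoid) (s₂ := numSetoid) (fun x y => lt x.1 y.1)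
    (fun _ _ _ _ ha hb => propext
      ⟨fun h => ⟨le_trans' (le_trans' ha.2 h.1) hb.1,
          fun h' => h.2 (le_trans' (le_trans' hb.1 h') ha.2)⟩,
        fun h => ⟨le_trans' (le_trans' ha.1 h.1) hb.2,
          fun h' => h.2 (le_trans' (le_trans' hb.2 h') ha.1)⟩⟩)⟩

end Surreal

namespace SetTheory.PGame

theorem lf_iff_aux (x y : PGame.{u}) :
    (lf x y ↔ ¬ le y x) ∧ (lf y x ↔ ¬ le x y) := by
  induction x generalizing y with
  | mk xl xr xL xR ihxl ihxr =>
  induction y with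
  | mk yl yr yL yR ihyl ihyr =>
  constructor
  · rw [lf_def, le_def]
    simp only [not_and_or, not_forall]
    exact or_congr (exists_congr fun i => ((ihyl i).2.not.trans not_not).symm)
      (exists_congr fun j => ((ihxr j _).2.not.trans not_not).symm)
  · rw [lf_def, le_def]
    simp only [not_and_or, not_forall]
    exact or_congr (exists_congr fun i => ((ihxl i _).1.not.trans not_not).symm)
      (exists_congr fun j => ((ihyr j).1.not.trans not_not).symm)

theorem numeric_moves_le (x : PGame.{u}) (hx : Numeric x) :
    (∀ i, le (x.moveLeft i) x) ∧ ∀ j, le x (x.moveRight j) := by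
  induction x with
  | mk xl xr xL xR ihl ihr =>
  have hx' : (∀ i j, lt (xL i) (xR j)) ∧ (∀ i, Numeric (xL i)) ∧ ∀ j, Numeric (xR j) := hx
  obtain ⟨hlt, hl, hr⟩ := hx'
  refine ⟨fun i => ?_, fun j => ?_⟩
  · refine le_def.2 ⟨fun k => ?_, fun j => ?_⟩
    · exact lf_def.2 (Or.inl ⟨i, (ihl i (hl i)).1 k⟩)
    · exact (lf_iff_aux (xL i) (xR j)).1.2 (hlt i j).2
  · refine le_def.2 ⟨fun i => ?_, fun k => ?_⟩
    · exact (lf_iff_aux (xL i) (xR j)).1.2 (hlt i j).2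
    · exact lf_def.2 (Or.inr ⟨j, (ihr j (hr j)).2 k⟩)

theorem lf_asymm_aux (x : PGame.{u}) (hx : Numeric x) :
    ∀ y : PGame.{u}, Numeric y → lf x y → ¬ lf y x := by
  induction x with
  | mk xl xr xL xR ihl ihr =>
  intro y hy h₁ h₂
  cases y with
  | mk yl yr yL yR =>
  have hx' : (∀ i j, lt (xL i) (xR j)) ∧ (∀ i, Numeric (xL i)) ∧ ∀ j, Numeric (xR j) := hx
  have hy' : (∀ i j, lt (yL i) (yR j)) ∧ (∀ i, Numeric (yL i)) ∧ ∀ j, Numeric (yR j) := hy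
  rcases lf_def.1 h₁ with ⟨i, h₁⟩ | ⟨j, h₁⟩ <;> rcases lf_def.1 h₂ with ⟨i', h₂⟩ | ⟨j', h₂⟩
  · exact ihl i' (hx'.2.1 i') (yL i) (hy'.2.1 i) ((le_def.1 h₁).1 i') ((le_def.1 h₂).1 i)
  · exact (hy'.1 i j').2 (le_trans' h₂ h₁)
  · exact (hx'.1 i' j).2 (le_trans' h₁ h₂)
  · exact ihr j (hx'.2.2 j) (yR j') (hy'.2.2 j') ((le_def.1 h₁).2 j') ((le_def.1 h₂).2 j)

end SetTheory.PGame

open SetTheory PGame in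
theorem surreal_lt_of_not_le {a b : Surreal.{u}} : ¬ b ≤ a → a < b :=
  Quotient.inductionOn₂ a b fun x y h => by
    have hlf : lf x.1 y.1 := (lf_iff_aux x.1 y.1).1.2 h
    show lt x.1 y.1
    exact ⟨not_not.1 (mt (lf_iff_aux y.1 x.1).1.2 (lf_asymm_aux x.1 x.2 y.1 y.2 hlf)), h⟩

instance surrealPreorder : Preorder Surreal.{u} where
  toLE := inferInstance
  toLT := inferInstance
  le_refl a := Quotient.inductionOn a fun x => SetTheory.PGame.le_refl' x.1
  le_trans a b c := Quotient.inductionOn₃ a b c fun _ _ _ => SetTheory.PGame.le_trans'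
  lt_iff_le_not_ge a b := Quotient.inductionOn₂ a b fun _ _ => Iff.rfl

open SetTheory PGame in
/-- For small sets `L, R` of surreals with `L < R`, there is a surreal in the cut `(L|R)`. -/
lemma exists_mem_cut (L R : Set Surreal.{u}) [Small.{u} L] [Small.{u} R]
    (h : ∀ l ∈ L, ∀ r ∈ R, l < r) :
    ∃ x : Surreal.{u}, (∀ l ∈ L, l < x) ∧ ∀ r ∈ R, x < r := by
  let f : Shrink.{u} L → PGame.{u} := fun i => (Quotient.out ((equivShrink L).symm i).1).1
  let g : Shrink.{u} R → PGame.{u} := fun j => (Quotient.out ((equivShrink R).symm j).1).1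
  have hf : ∀ i, (f i).Numeric := fun i => (Quotient.out ((equivShrink L).symm i).1).2
  have hg : ∀ j, (g j).Numeric := fun j => (Quotient.out ((equivShrink R).symm j).1).2
  have hfs : ∀ i, Quotient.mk numSetoid ⟨f i, hf i⟩ = ((equivShrink L).symm i).1 := fun i =>
    Quotient.out_eq _
  have hgs : ∀ j, Quotient.mk numSetoid ⟨g j, hg j⟩ = ((equivShrink R).symm j).1 := fun j =>
    Quotient.out_eq _
  let x : PGame.{u} := ⟨Shrink.{u} L, Shrink.{u} R, f, g⟩
  have hx : x.Numeric := by
    have hlt : ∀ i j, lt (f i) (g j) := fun i j => by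
      have := h _ ((equivShrink L).symm i).2 _ ((equivShrink R).symm j).2
      rw [← hfs i, ← hgs j] at this
      exact this
    show (∀ i j, lt (f i) (g j)) ∧ (∀ i, Numeric (f i)) ∧ ∀ j, Numeric (g j)
    exact ⟨hlt, hf, hg⟩
  obtain ⟨hml, hmr⟩ := numeric_moves_le x hx
  refine ⟨Quotient.mk numSetoid ⟨x, hx⟩, fun l hl => ?_, fun r hr => ?_⟩
  · obtain ⟨i, hi⟩ : ∃ i, ((equivShrink L).symm i).1 = l := ⟨equivShrink L ⟨l, hl⟩, by simp⟩
    rw [← hi, ← hfs i]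
    show lt (f i) x
    refine ⟨hml i, fun hle => ?_⟩
    exact (lf_iff_aux (f i) (f i)).1.1 ((le_def.1 hle).1 i) (le_refl' (f i))
  · obtain ⟨j, hj⟩ : ∃ j, ((equivShrink R).symm j).1 = r := ⟨equivShrink R ⟨r, hr⟩, by simp⟩
    rw [← hj, ← hgs j]
    show lt x (g j)
    refine ⟨hmr j, fun hle => ?_⟩
    exact (lf_iff_aux (g j) (g j)).1.1 ((le_def.1 hle).2 j) (le_refl' (g j))

/-- Lemma 2.1 of the paper: for small sets `A, B, C, D` of surreal numbers with `A < B`,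
`C < D` and `(A|B) ∩ (C|D) = ∅`, we have `(A|B) < (C|D)` if and only if there are
`b ∈ B` and `c ∈ C` with `b ≤ c`. -/
theorem cut_lt_cut_iff (A B C D : Set Surreal.{u})
    [Small.{u} A] [Small.{u} B] [Small.{u} C] [Small.{u} D]
    (hAB : ∀ a ∈ A, ∀ b ∈ B, a < b)
    (hCD : ∀ c ∈ C, ∀ d ∈ D, c < d)
    (hdisj : {x : Surreal | (∀ a ∈ A, a < x) ∧ ∀ b ∈ B, x < b} ∩
        {y : Surreal | (∀ c ∈ C, c < y) ∧ ∀ d ∈ D, y < d} = ∅) :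
    (∀ x ∈ {x : Surreal | (∀ a ∈ A, a < x) ∧ ∀ b ∈ B, x < b},
      ∀ y ∈ {y : Surreal | (∀ c ∈ C, c < y) ∧ ∀ d ∈ D, y < d}, x < y) ↔
      ∃ b ∈ B, ∃ c ∈ C, b ≤ c := by
  constructor
  · intro hlt
    by_contra hbc
    push_neg at hbc
    -- so every c ∈ C is less than every b ∈ B
    obtain ⟨x, hx⟩ := exists_mem_cut A B hAB
    obtain ⟨y, hy⟩ := exists_mem_cut C D hCD
    have hxy : x < y := hlt x hx y hy
    -- build the combined cut (A ∪ C | B ∪ D)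
    have hcomb : ∀ l ∈ A ∪ C, ∀ r ∈ B ∪ D, l < r := by
      rintro l (hl | hl) r (hr | hr)
      · exact hAB l hl r hr
      · exact lt_trans (hx.1 l hl) (lt_trans hxy (hy.2 r hr))
      · exact surreal_lt_of_not_le (hbc r hr l hl)
      · exact hCD l hl r hr
    obtain ⟨z, hz1, hz2⟩ := exists_mem_cut (A ∪ C) (B ∪ D) hcomb
    have : z ∈ ({x : Surreal | (∀ a ∈ A, a < x) ∧ ∀ b ∈ B, x < b} ∩
        {y : Surreal | (∀ c ∈ C, c < y) ∧ ∀ d ∈ D, y < d}) :=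
      ⟨⟨fun a ha => hz1 a (Or.inl ha), fun b hb => hz2 b (Or.inl hb)⟩,
       ⟨fun c hc => hz1 c (Or.inr hc), fun d hd => hz2 d (Or.inr hd)⟩⟩
    rw [hdisj] at this
    exact this
  · rintro ⟨b, hb, c, hc, hbc⟩ x hx y hy
    exact lt_of_lt_of_le (hx.2 b hb) (le_trans hbc (hy.1 c hc).le)
end

section
/- On the Hahn field 𝕊 = ℝ[[𝔐]], the truncation relation ⊴ is a partial order (reflexive, antisymmetric, transitive) which is well-founded and has the zero series as its minimum element. -/
variable {M : Type*} [CommGroup M] [LinearOrder M] [IsOrderedMonoid M]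

/-- In the Hahn field `𝕊 = ℝ[[𝔐]]` (realized as Hahn series over `ℝ` with exponents in the
order dual of the monomial group `𝔐`, so that supports are well-based), the series `g` is a
*truncation* of `f`, written `g ⊴ f`, if every element of `supp (f - g)` is strictly smaller
(in the ordering of `𝔐`) than every element of `supp g`. -/
def IsTruncation (g f : HahnSeries Mᵒᵈ ℝ) : Prop :=
  ∀ m ∈ (f - g).support, ∀ n ∈ g.support,
    OrderDual.ofDual m < OrderDual.ofDual n

private lemma trunc_notMem {g f : HahnSeries Mᵒᵈ ℝ} (h : IsTruncation g f) :
    ∀ m ∈ (f - g).support, m ∉ g.support := by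
  intro m hm hmg
  exact lt_irrefl _ (h m hm m hmg)

private lemma trunc_supp_sub {g f : HahnSeries Mᵒᵈ ℝ} (h : IsTruncation g f) :
    g.support ⊆ f.support := by
  intro n hn
  by_contra hnf
  have hns : n ∈ (f - g).support := by
    simp only [HahnSeries.mem_support, HahnSeries.coeff_sub] at *
    intro he
    apply hn
    have : f.coeff n = 0 := by simpa using hnf
    linarith [sub_eq_zero.mp he]
  exact lt_irrefl _ (h n hns n hn)

private lemma trunc_sub_supp {g f : HahnSeries Mᵒᵈ ℝ} (h : IsTruncation g f) :
    ∀ m ∈ (f - g).support, m ∈ f.support := by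
  intro m hm
  have hg : g.coeff m = 0 := by
    have := trunc_notMem h m hm
    simpa using this
  simp only [HahnSeries.mem_support, HahnSeries.coeff_sub, hg, sub_zero] at hm
  exact hm


private lemma trunc_antisymm {f g : HahnSeries Mᵒᵈ ℝ} (h1 : IsTruncation f g)
    (h2 : IsTruncation g f) : f = g := by
  by_contra hne
  have hsub : g - f ≠ 0 := sub_ne_zero.mpr (Ne.symm hne)
  obtain ⟨m, hm⟩ := HahnSeries.support_nonempty_iff.mpr hsub
  have hmg : m ∈ g.support := trunc_sub_supp h1 m hm
  have hm' : m ∈ (f - g).support := by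
    simp only [HahnSeries.mem_support, HahnSeries.coeff_sub] at *
    intro he; exact hm (by linarith)
  exact lt_irrefl _ (h2 m hm' m hmg)

private lemma trunc_trans {f g h : HahnSeries Mᵒᵈ ℝ} (h1 : IsTruncation f g)
    (h2 : IsTruncation g h) : IsTruncation f h := by
  intro m hm n hn
  have hfg : f.support ⊆ g.support := trunc_supp_sub h1
  by_cases hc : m ∈ (g - f).support
  · exact h1 m hc n hn
  · have hmh : m ∈ (h - g).support := by
      simp only [HahnSeries.mem_support, HahnSeries.coeff_sub, not_not] at *
      intro he
      exact hm (by linarith [sub_eq_zero.mp hc])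
    exact h2 m hmh n (hfg hn)

/-- The truncation relation `⊴` on `𝕊 = ℝ[[𝔐]]` is a partial order (reflexive,
antisymmetric and transitive), its associated strict order is well-founded, and the zero
series is its minimum. -/
theorem isTruncation_partialOrder_wellFounded_bot :
    (∀ f : HahnSeries Mᵒᵈ ℝ, IsTruncation f f) ∧
    (∀ f g : HahnSeries Mᵒᵈ ℝ, IsTruncation f g → IsTruncation g f → f = g) ∧
    (∀ f g h : HahnSeries Mᵒᵈ ℝ, IsTruncation f g → IsTruncation g h → IsTruncation f h) ∧
    WellFounded (fun g f : HahnSeries Mᵒᵈ ℝ => IsTruncation g f ∧ g ≠ f) ∧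
    (∀ f : HahnSeries Mᵒᵈ ℝ, IsTruncation 0 f) := by
  refine ⟨?_, ?_, ?_, ?_, ?_⟩
  · intro f m hm n hn
    simp [sub_self] at hm
  · exact fun f g h1 h2 => trunc_antisymm h1 h2
  · exact fun f g h h1 h2 => trunc_trans h1 h2
  · -- well-foundedness
    haveI : IsIrrefl (HahnSeries Mᵒᵈ ℝ) (fun g f => IsTruncation g f ∧ g ≠ f) :=
      ⟨fun a h => h.2 rfl⟩
    haveI : IsTrans (HahnSeries Mᵒᵈ ℝ) (fun g f => IsTruncation g f ∧ g ≠ f) := by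
      refine ⟨fun a b c hab hbc => ⟨trunc_trans hab.1 hbc.1, fun hac => ?_⟩⟩
      subst hac
      exact hbc.2 (trunc_antisymm hbc.1 hab.1)
    haveI : IsStrictOrder (HahnSeries Mᵒᵈ ℝ) (fun g f => IsTruncation g f ∧ g ≠ f) := {}
    rw [RelEmbedding.wellFounded_iff_isEmpty]
    by_contra hcon
    rw [not_isEmpty_iff] at hcon
    obtain ⟨e⟩ := hcon
    set F : ℕ → HahnSeries Mᵒᵈ ℝ := fun n => e n with hF
    have hstep : ∀ n : ℕ, IsTruncation (F (n + 1)) (F n) ∧ F (n + 1) ≠ F n :=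
      fun n => e.map_rel_iff.mpr (Nat.lt_succ_self n)
    have hne : ∀ n : ℕ, (F n - F (n + 1)).support.Nonempty := fun n =>
      HahnSeries.support_nonempty_iff.mpr (sub_ne_zero.mpr (Ne.symm (hstep n).2))
    have hwf : ∀ n : ℕ, (F n - F (n + 1)).support.IsWF := fun n =>
      (F n - F (n + 1)).isPWO_support.isWF
    set m : ℕ → Mᵒᵈ := fun n => (hwf n).min (hne n) with hm
    have hmem : ∀ n, m n ∈ (F n - F (n + 1)).support := fun n => (hwf n).min_mem (hne n)
    have hmsupp : ∀ n, m n ∈ (F n).support := fun n =>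
      trunc_sub_supp (hstep n).1 (m n) (hmem n)
    have hanti : StrictAnti m := by
      apply strictAnti_nat_of_succ_lt
      intro n
      have h1 : m (n + 1) ∈ (F (n + 1)).support := hmsupp (n + 1)
      exact (hstep n).1 (m n) (hmem n) (m (n + 1)) h1
    have hsub : ∀ n, (F n).support ⊆ (F 0).support := by
      intro n
      induction n with
      | zero => exact fun _ h => h
      | succ k ih => exact fun x hx => ih (trunc_supp_sub (hstep k).1 hx)
    have h0wf : (F 0).support.IsWF := (F 0).isPWO_support.isWF
    rw [Set.isWF_iff_no_descending_seq] at h0wf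
    exact h0wf m hanti fun n => hsub n (hmsupp n)
  · intro f m hm n hn
    simp at hn
end
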